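/- Let γ > 0 and M > 0, and let v : ℂ → ℂ be 2π-periodic, analytic on the strip {θ ∈ ℂ : |Im θ| < γ}, and satisfy |v(θ)| < M on that strip. Let I = ∫_{−π}^{π} v(θ) dθ (integral over real θ) and for a positive integer N let I_N = (2π/N) Σ_{k=1}^{N} v(θ_k) with θ_k = 2πk/N − π. Then for every N ≥ 1, |I_N − I| ≤ 4πM/(e^{γN} − 1). -/

import Mathlib

open Complex Real Filter intervalIntegral

lemma shift_lemma (v : ℂ → ℂ) {γ : ℝ}
    (hper : ∀ θ : ℂ, v (θ + 2 * Real.pi) = v θ)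
    (hd : DifferentiableOn ℂ v {θ : ℂ | |θ.im| < γ})
    (n : ℤ) {s : ℝ} (hs : |s| < γ) :
    (∫ x : ℝ in (-Real.pi)..Real.pi, Complex.exp (-n * Complex.I * x) * v x)
      = ∫ x : ℝ in (-Real.pi)..Real.pi,
          Complex.exp (-n * Complex.I * (x + s * Complex.I)) * v (x + s * Complex.I) := by
  set f : ℂ → ℂ := fun z => Complex.exp (-n * Complex.I * z) * v z with hf
  have hfper : ∀ z : ℂ, f (z + 2 * Real.pi) = f z := by
    intro z
    simp only [hf, hper]
    congr 1
    rw [mul_add, Complex.exp_add]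
    have : Complex.exp (-n * Complex.I * (2 * Real.pi)) = 1 := by
      rw [show (-n : ℂ) * Complex.I * (2 * Real.pi) = (-n : ℤ) * (2 * Real.pi * Complex.I) by
        push_cast; ring]
      exact Complex.exp_int_mul_two_pi_mul_I (-n)
    rw [this, mul_one]
  have key := Complex.integral_boundary_rect_eq_zero_of_differentiableOn f
      (-(Real.pi : ℂ)) ((Real.pi : ℂ) + s * Complex.I) ?_
  · simp only [Complex.neg_re, Complex.ofReal_re, Complex.neg_im, Complex.ofReal_im, neg_zero,
      Complex.add_re, Complex.mul_re, Complex.I_re, Complex.I_im, Complex.ofReal_re,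
      Complex.ofReal_im, Complex.add_im, Complex.mul_im] at key
    norm_num at key
    -- vertical sides cancel
    have hvert : (∫ y : ℝ in (0:ℝ)..s, f (Real.pi + y * Complex.I))
        = ∫ y : ℝ in (0:ℝ)..s, f (-Real.pi + y * Complex.I) := by
      refine intervalIntegral.integral_congr fun y _ => ?_
      rw [show (Real.pi : ℂ) + y * Complex.I = (-Real.pi + y * Complex.I) + 2 * Real.pi by ring]
      exact hfper _
    rw [hvert] at key
    have h0 : (∫ x : ℝ in (-Real.pi)..Real.pi, f ((x : ℂ) + 0 * Complex.I))
        = ∫ x : ℝ in (-Real.pi)..Real.pi, f x := by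
      refine intervalIntegral.integral_congr fun x _ => ?_
      norm_num
    simp only [hf] at key
    linear_combination key
  · have hsub : (Set.uIcc (-(Real.pi:ℂ)).re ((Real.pi:ℂ) + s * Complex.I).re ×ℂ
        Set.uIcc (-(Real.pi:ℂ)).im ((Real.pi:ℂ) + s * Complex.I).im) ⊆ {θ : ℂ | |θ.im| < γ} := by
      intro z hz
      obtain ⟨-, h2⟩ := Complex.mem_reProdIm.mp hz
      simp only [Complex.neg_im, Complex.ofReal_im, neg_zero, Complex.add_im, Complex.mul_im,
        Complex.I_im, Complex.I_re, Complex.ofReal_re, mul_zero, mul_one, zero_add] at h2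
      rw [Set.mem_uIcc] at h2
      have habs : |z.im| ≤ |s| := by
        rw [abs_le]
        rcases h2 with ⟨h1, h2⟩ | ⟨h1, h2⟩ <;>
          constructor <;> nlinarith [le_abs_self s, neg_abs_le s]
      exact lt_of_le_of_lt habs hs
    intro z hz
    exact ((Complex.differentiable_exp.comp (by fun_prop)).differentiableAt.differentiableWithinAt).mul
      ((hd.mono hsub) z hz)

lemma coeff_bound (v : ℂ → ℂ) {γ M : ℝ} (hγ : 0 < γ) (hM : 0 < M)
    (hper : ∀ θ : ℂ, v (θ + 2 * Real.pi) = v θ)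
    (hd : DifferentiableOn ℂ v {θ : ℂ | |θ.im| < γ})
    (hbdd : ∀ θ : ℂ, |θ.im| < γ → ‖v θ‖ < M) (n : ℤ) :
    ‖∫ x : ℝ in (-Real.pi)..Real.pi, Complex.exp (-n * Complex.I * x) * v x‖
      ≤ 2 * Real.pi * M * Real.exp (-γ * |n|) := by
  have step : ∀ a : ℝ, a ∈ Set.Ioo 0 γ →
      ‖∫ x : ℝ in (-Real.pi)..Real.pi, Complex.exp (-n * Complex.I * x) * v x‖
        ≤ 2 * Real.pi * M * Real.exp (-a * |n|) := by
    intro a ⟨ha0, haγ⟩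
    set s : ℝ := if 0 ≤ n then -a else a with hsdef
    have hs : |s| < γ := by
      have habs : |s| = a := by
        rcases le_or_gt 0 n with h | h
        · rw [hsdef, if_pos h, abs_neg, abs_of_pos ha0]
        · rw [hsdef, if_neg (not_le.mpr h), abs_of_pos ha0]
      rw [habs]; exact haγ
    have hns : (n : ℝ) * s = -a * ((|n| : ℤ) : ℝ) := by
      rcases le_or_gt 0 n with h | h
      · rw [hsdef, if_pos h, _root_.abs_of_nonneg h]; push_cast; ring
      · rw [hsdef, if_neg (not_le.mpr h), abs_of_neg h]; push_cast; ring
    rw [shift_lemma v hper hd n hs]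
    have hb : ∀ x ∈ Set.uIoc (-Real.pi) Real.pi,
        ‖Complex.exp (-n * Complex.I * (x + s * Complex.I)) * v (x + s * Complex.I)‖
          ≤ Real.exp (-a * |n|) * M := by
      intro x _
      rw [norm_mul, Complex.norm_exp]
      have hre : (-n * Complex.I * (x + s * Complex.I)).re = -a * |n| := by
        simp [Complex.mul_re, Complex.add_re, Complex.add_im]
        rw [hns, Int.cast_abs]; ring
      rw [hre]
      have him : ((x : ℂ) + s * Complex.I).im = s := by simp
      refine mul_le_mul_of_nonneg_left ?_ (Real.exp_nonneg _)
      exact (hbdd _ (by rw [him]; exact hs)).le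
    calc ‖∫ x : ℝ in (-Real.pi)..Real.pi,
            Complex.exp (-n * Complex.I * (x + s * Complex.I)) * v (x + s * Complex.I)‖
        ≤ Real.exp (-a * |n|) * M * |Real.pi - (-Real.pi)| :=
          intervalIntegral.norm_integral_le_of_norm_le_const hb
      _ = 2 * Real.pi * M * Real.exp (-a * |n|) := by
          rw [abs_of_pos (by have := Real.pi_pos; linarith : (0:ℝ) < Real.pi - (-Real.pi))]; ring
  refine ge_of_tendsto (f := fun a : ℝ => 2 * Real.pi * M * Real.exp (-a * |n|))
    (x := nhdsWithin γ (Set.Iio γ)) ?_ ?_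
  · exact ((continuous_const.mul ((continuous_id.neg.mul continuous_const).rexp)).tendsto γ).mono_left
      nhdsWithin_le_nhds
  · filter_upwards [Ioo_mem_nhdsLT_of_mem ⟨hγ, le_refl γ⟩] with a ha using step a ha

open Complex Real Filter intervalIntegral Finset

section Main
variable (γ M : ℝ) (v : ℂ → ℂ)

theorem stmt11' (hγ : 0 < γ) (hM : 0 < M)
    (hper : ∀ θ : ℂ, v (θ + 2 * Real.pi) = v θ)
    (hd : DifferentiableOn ℂ v {θ : ℂ | |θ.im| < γ})
    (hbdd : ∀ θ : ℂ, |θ.im| < γ → ‖v θ‖ < M)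
    (N : ℕ) (hN : 1 ≤ N) :
    ‖(2 * Real.pi / N) * ∑ k ∈ Finset.Icc 1 N, v ((2 * Real.pi * k / N - Real.pi : ℝ) : ℂ)
          - ∫ θ : ℝ in (-Real.pi)..Real.pi, v (θ : ℂ)‖
      ≤ 4 * Real.pi * M / (Real.exp (γ * N) - 1) := by
  haveI : Fact (0 < 2 * Real.pi) := ⟨by positivity⟩
  have hπ : (0:ℝ) < Real.pi := Real.pi_pos
  have hNR : (0:ℝ) < N := by exact_mod_cast hN
  have hNC : ((N:ℂ)) ≠ 0 := by exact_mod_cast hNR.ne'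
  -- the strip is open
  have hopen : IsOpen {θ : ℂ | |θ.im| < γ} :=
    isOpen_Iio.preimage (_root_.continuous_abs.comp Complex.continuous_im)
  -- continuity on ℝ
  have hcontR : Continuous fun x : ℝ => v x := by
    rw [continuous_iff_continuousAt]
    intro x
    have : ContinuousAt v ((x:ℝ) : ℂ) :=
      (hd.continuousOn.continuousAt (hopen.mem_nhds (by simp [hγ])))
    exact this.comp (Complex.continuous_ofReal.continuousAt)
  have hperR : Function.Periodic (fun x : ℝ => v x) (2 * Real.pi) := fun x => by
    show v (((x + 2 * Real.pi : ℝ)) : ℂ) = v x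
    rw [show ((x + 2 * Real.pi : ℝ) : ℂ) = (x : ℂ) + 2 * Real.pi by push_cast; ring]
    exact hper x
  -- function on the circle
  set G : C(AddCircle (2 * Real.pi), ℂ) :=
    ⟨hperR.lift, by
      rw [(QuotientAddGroup.isQuotientMap_mk _).continuous_iff]
      exact hcontR⟩ with hG
  have hGcoe : ∀ x : ℝ, G (x : AddCircle (2 * Real.pi)) = v x := fun x => rfl
  set c : ℤ → ℂ := fourierCoeff ⇑G with hc
  -- fourier evaluated at reals
  have hfour : ∀ (n : ℤ) (x : ℝ),
      fourier n ((x : ℝ) : AddCircle (2 * Real.pi)) = Complex.exp (Complex.I * n * x) := by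
    intro n x
    rw [fourier_coe_apply]
    congr 1
    have hπC : (Real.pi : ℂ) ≠ 0 := Complex.ofReal_ne_zero.mpr Real.pi_ne_zero
    push_cast
    field_simp
  -- coefficients as interval integrals
  have hcoeff : ∀ n : ℤ, c n = (1 / (2 * Real.pi) : ℝ) •
      ∫ x : ℝ in (-Real.pi)..Real.pi, Complex.exp (-n * Complex.I * x) * v x := by
    intro n
    rw [hc, fourierCoeff_eq_intervalIntegral ⇑G n (-Real.pi)]
    congr 1
    rw [show -Real.pi + 2 * Real.pi = Real.pi by ring]
    refine intervalIntegral.integral_congr fun x _ => ?_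
    rw [hGcoe, hfour, smul_eq_mul]
    congr 1
    push_cast
    ring
  -- coefficient bound
  have hcb : ∀ n : ℤ, ‖c n‖ ≤ M * Real.exp (-γ * |n|) := by
    intro n
    rw [hcoeff n]
    rw [norm_smul, Real.norm_eq_abs,
      abs_of_pos (by positivity : (0:ℝ) < 1 / (2 * Real.pi))]
    calc (1 / (2 * Real.pi)) *
          ‖∫ x : ℝ in (-Real.pi)..Real.pi, Complex.exp (-n * Complex.I * x) * v x‖
        ≤ (1 / (2 * Real.pi)) * (2 * Real.pi * M * Real.exp (-γ * |n|)) := by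
          exact mul_le_mul_of_nonneg_left (coeff_bound v hγ hM hper hd hbdd n) (by positivity)
      _ = M * Real.exp (-γ * |n|) := by field_simp
  -- summability of coefficients
  have hr1 : Real.exp (-γ) < 1 := Real.exp_lt_one_iff.mpr (by linarith)
  have hr0 : (0:ℝ) ≤ Real.exp (-γ) := (Real.exp_pos _).le
  have hgsum : Summable fun n : ℤ => M * Real.exp (-γ) ^ n.natAbs := by
    apply Summable.of_nat_of_neg_add_one
    · simpa using (summable_geometric_of_lt_one hr0 hr1).mul_left M
    · have : Summable fun n : ℕ => (M * Real.exp (-γ)) * Real.exp (-γ) ^ n :=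
        (summable_geometric_of_lt_one hr0 hr1).mul_left _
      refine this.congr fun n => ?_
      rw [show (-((n:ℤ) + 1)).natAbs = n + 1 from by omega, pow_succ]
      ring
  have habs_eq : ∀ n : ℤ, Real.exp (-γ * ((|n| : ℤ) : ℝ)) = Real.exp (-γ) ^ n.natAbs := by
    intro n
    rw [← Real.exp_nat_mul]
    congr 1
    push_cast [Nat.cast_natAbs]
    ring
  have hsummable : Summable c := by
    refine Summable.of_norm ?_
    refine hgsum.of_nonneg_of_le (fun n => norm_nonneg _) fun n => ?_
    calc ‖c n‖ ≤ M * Real.exp (-γ * |n|) := hcb n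
      _ = M * Real.exp (-γ) ^ n.natAbs := by rw [habs_eq]
  -- pointwise Fourier expansion
  have hpt : ∀ x : ℝ, HasSum (fun n : ℤ => c n • fourier n ((x:ℝ) : AddCircle (2 * Real.pi))) (v x) := by
    intro x
    have := has_pointwise_sum_fourier_series_of_summable (f := G) hsummable ((x:ℝ) : AddCircle (2*Real.pi))
    rwa [hGcoe] at this

  -- nodes
  set θk : ℕ → ℝ := fun k => 2 * Real.pi * k / N - Real.pi with hθk
  have hπC : (Real.pi : ℂ) ≠ 0 := Complex.ofReal_ne_zero.mpr Real.pi_ne_zero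
  -- roots of unity
  set w : ℤ → ℂ := fun n => Complex.exp (2 * Real.pi * Complex.I * n / N) with hw
  have hfour_node : ∀ (n : ℤ) (k : ℕ),
      fourier n ((θk k : ℝ) : AddCircle (2 * Real.pi))
        = Complex.exp (-(n:ℂ) * Real.pi * Complex.I) * (w n) ^ k := by
    intro n k
    rw [hfour n (θk k), hw, ← Complex.exp_nat_mul, ← Complex.exp_add]
    congr 1
    simp only [hθk]
    push_cast
    field_simp
    ring
  have hsum_w : ∀ n : ℤ, (∑ k ∈ Finset.Icc 1 N, (w n) ^ k)
      = if (N:ℤ) ∣ n then (N:ℂ) else 0 := by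
    intro n
    by_cases hdvd : (N:ℤ) ∣ n
    · obtain ⟨m, rfl⟩ := hdvd
      have hw1 : w ((N:ℤ) * m) = 1 := by
        show Complex.exp (2 * (Real.pi:ℂ) * Complex.I * (((N:ℤ) * m : ℤ) : ℂ) / N) = 1
        rw [show 2 * (Real.pi:ℂ) * Complex.I * (((N:ℤ) * m : ℤ) : ℂ) / N
            = (m:ℤ) * (2 * Real.pi * Complex.I) by push_cast; field_simp]
        exact Complex.exp_int_mul_two_pi_mul_I m
      rw [hw1, if_pos ⟨m, rfl⟩]
      simp
    · have hw1 : w n ≠ 1 := by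
        intro h
        rw [hw, Complex.exp_eq_one_iff] at h
        obtain ⟨m, hm⟩ := h
        refine hdvd ⟨m, ?_⟩
        have h2πI : (2 * (Real.pi:ℂ) * Complex.I) ≠ 0 := by
          simp [Real.pi_ne_zero, Complex.I_ne_zero]
        have h1 : (2 * (Real.pi:ℂ) * Complex.I) * n
            = (2 * (Real.pi:ℂ) * Complex.I) * (m * N) := by
          field_simp at hm
          linear_combination (2 * (Real.pi:ℂ) * Complex.I) * hm
        have h2 := mul_left_cancel₀ h2πI h1
        have h3 : n = m * (N:ℤ) := by exact_mod_cast h2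
        rw [h3, mul_comm]
      have hwN : (w n) ^ N = 1 := by
        rw [hw, ← Complex.exp_nat_mul,
          show (N:ℂ) * (2 * Real.pi * Complex.I * n / N) = (n:ℤ) * (2 * Real.pi * Complex.I) from by
            push_cast; field_simp]
        exact Complex.exp_int_mul_two_pi_mul_I n
      have hIcc : ∑ k ∈ Finset.Icc 1 N, (w n) ^ k = w n * ∑ k ∈ Finset.range N, (w n) ^ k := by
        rw [Finset.mul_sum, show Finset.Icc 1 N = Finset.Ico 1 (N+1) from (Finset.Ico_add_one_right_eq_Icc 1 N),
          Finset.sum_Ico_eq_sum_range]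
        simp only [Nat.add_sub_cancel]
        refine Finset.sum_congr rfl fun i _ => ?_
        rw [pow_add, pow_one]
      rw [hIcc, geom_sum_eq hw1, hwN, if_neg hdvd]
      simp
  have hEn : ∀ n : ℤ, (2 * (Real.pi:ℂ) / N) *
        ∑ k ∈ Finset.Icc 1 N, c n • fourier n ((θk k : ℝ) : AddCircle (2 * Real.pi))
      = if (N:ℤ) ∣ n then (2 * (Real.pi:ℂ)) * Complex.exp (-(n:ℂ) * Real.pi * Complex.I) * c n
        else 0 := by
    intro n
    have hstep : ∑ k ∈ Finset.Icc 1 N, c n • fourier n ((θk k : ℝ) : AddCircle (2 * Real.pi))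
        = c n * Complex.exp (-(n:ℂ) * Real.pi * Complex.I) * ∑ k ∈ Finset.Icc 1 N, (w n)^k := by
      rw [Finset.mul_sum]
      refine Finset.sum_congr rfl fun k _ => ?_
      rw [hfour_node, smul_eq_mul]
      ring
    rw [hstep, hsum_w]
    by_cases hdvd : (N:ℤ) ∣ n
    · rw [if_pos hdvd, if_pos hdvd]
      field_simp
    · rw [if_neg hdvd, if_neg hdvd, mul_zero, mul_zero]
  -- the integral is 2π c₀
  have hI : (∫ θ : ℝ in (-Real.pi)..Real.pi, v (θ : ℂ)) = (2 * (Real.pi:ℂ)) * c 0 := by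
    have h0 := hcoeff 0
    simp only [Int.cast_zero, neg_zero, zero_mul, Complex.exp_zero, one_mul] at h0
    rw [h0, Complex.real_smul]
    push_cast
    rw [← mul_assoc]
    field_simp
  -- main HasSum
  have hHas : HasSum (fun n : ℤ => (2 * (Real.pi:ℂ) / N) *
        ∑ k ∈ Finset.Icc 1 N, c n • fourier n ((θk k : ℝ) : AddCircle (2 * Real.pi)))
      ((2 * (Real.pi:ℂ) / N) * ∑ k ∈ Finset.Icc 1 N, v ((θk k : ℝ) : ℂ)) :=
    HasSum.mul_left _ (hasSum_sum fun k _ => hpt (θk k))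
  simp only [hEn] at hHas
  have hF : HasSum (fun n : ℤ =>
      (if (N:ℤ) ∣ n then (2 * (Real.pi:ℂ)) * Complex.exp (-(n:ℂ) * Real.pi * Complex.I) * c n
        else 0) - (if n = 0 then (2 * (Real.pi:ℂ)) * c 0 else 0))
      ((2 * (Real.pi:ℂ) / N) * ∑ k ∈ Finset.Icc 1 N, v ((θk k : ℝ) : ℂ)
        - (2 * (Real.pi:ℂ)) * c 0) :=
    hHas.sub (hasSum_ite_eq 0 _)
  set Fn : ℤ → ℂ := fun n =>
      (if (N:ℤ) ∣ n then (2 * (Real.pi:ℂ)) * Complex.exp (-(n:ℂ) * Real.pi * Complex.I) * c n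
        else 0) - (if n = 0 then (2 * (Real.pi:ℂ)) * c 0 else 0) with hFn
  have hinj : Function.Injective (fun j : ℤ => j * N) :=
    fun a b h => mul_right_cancel₀ (by exact_mod_cast hNR.ne' : (N:ℤ) ≠ 0) h
  have hvanish : ∀ n : ℤ, n ∉ Set.range (fun j : ℤ => j * N) → Fn n = 0 := by
    intro n hn
    have hndvd : ¬ (N:ℤ) ∣ n := by
      intro ⟨m, hm⟩
      exact hn ⟨m, by rw [hm]; ring⟩
    have hn0 : n ≠ 0 := fun h => hndvd (h ▸ dvd_zero _)
    rw [hFn]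
    simp [hndvd, hn0]
  have hj : HasSum (fun j : ℤ => Fn (j * N))
      ((2 * (Real.pi:ℂ) / N) * ∑ k ∈ Finset.Icc 1 N, v ((θk k : ℝ) : ℂ)
        - (2 * (Real.pi:ℂ)) * c 0) :=
    (hinj.hasSum_iff hvanish).mpr hF
  -- bound each term
  set r : ℝ := Real.exp (-(γ * N)) with hrdef
  have hrpos : 0 < r := Real.exp_pos _
  have hrlt : r < 1 := Real.exp_lt_one_iff.mpr (by nlinarith : -(γ * (N:ℝ)) < 0)
  set C : ℝ := 2 * Real.pi * M with hC
  set bnd : ℤ → ℝ := fun j => if j = 0 then 0 else C * r ^ j.natAbs with hbnddef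
  have h2πnorm : ‖(2 * (Real.pi:ℂ))‖ = 2 * Real.pi := by
    rw [show (2 * (Real.pi:ℂ)) = ((2 * Real.pi : ℝ) : ℂ) by push_cast; ring,
      Complex.norm_real, Real.norm_eq_abs, abs_of_pos (by positivity)]
  have hbnd : ∀ j : ℤ, ‖Fn (j * N)‖ ≤ bnd j := by
    intro j
    by_cases hj0 : j = 0
    · subst hj0
      rw [hbnddef, hFn]
      simp
    · rw [hbnddef]
      simp only [if_neg hj0]
      rw [hFn]
      have hjN0 : j * (N:ℤ) ≠ 0 := mul_ne_zero hj0 (by exact_mod_cast hNR.ne')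
      simp only [if_neg hjN0, sub_zero, if_pos (dvd_mul_left (N:ℤ) j)]
      rw [norm_mul, norm_mul]
      have habs1 : ‖Complex.exp (-((j * (N:ℤ) : ℤ):ℂ) * Real.pi * Complex.I)‖ = 1 := by
        rw [Complex.norm_exp]
        simp [Complex.mul_re, Complex.mul_im]
      have hexp_eq : Real.exp (-γ * ((|j * (N:ℤ)| : ℤ) : ℝ)) = r ^ j.natAbs := by
        rw [hrdef, ← Real.exp_nat_mul]
        congr 1
        rw [Int.abs_eq_natAbs, show (j * (N:ℤ)).natAbs = j.natAbs * N from by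
          simp [Int.natAbs_mul]]
        push_cast [Nat.cast_natAbs]
        ring
      rw [habs1, mul_one, h2πnorm]
      calc 2 * Real.pi * ‖c (j * (N:ℤ))‖
          ≤ 2 * Real.pi * (M * (r ^ j.natAbs)) := by
            refine mul_le_mul_of_nonneg_left ?_ (by positivity)
            calc ‖c (j * (N:ℤ))‖
                ≤ M * Real.exp (-γ * ((|j * (N:ℤ)| : ℤ) : ℝ)) := hcb _
              _ = M * r ^ j.natAbs := by rw [hexp_eq]
        _ = C * r ^ j.natAbs := by rw [hC]; ring
  have hgeo : HasSum (fun n : ℕ => (C * r) * r ^ n) ((C * r) * (1 - r)⁻¹) :=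
    (hasSum_geometric_of_lt_one hrpos.le hrlt).mul_left _
  have hfe : (fun n : ℕ => bnd (((n + 1 : ℕ)) : ℤ)) = fun n : ℕ => (C * r) * r ^ n := by
    funext n
    rw [hbnddef]
    simp only [if_neg (show ((n + 1 : ℕ) : ℤ) ≠ 0 from by exact_mod_cast Nat.succ_ne_zero n)]
    rw [show (((n + 1 : ℕ)) : ℤ).natAbs = n + 1 from by omega, pow_succ]
    ring
  have hnat : HasSum (fun n : ℕ => bnd (n : ℤ)) (C * r * (1 - r)⁻¹) := by
    have h1 : HasSum (fun n : ℕ => bnd (((n + 1 : ℕ)) : ℤ)) (C * r * (1 - r)⁻¹) := by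
      rw [hfe]; exact hgeo
    have h2 := (hasSum_nat_add_iff (f := fun n : ℕ => bnd (n : ℤ)) 1).mp h1
    simpa [hbnddef] using h2
  have hneg : HasSum (fun n : ℕ => bnd (-((n : ℤ) + 1))) (C * r * (1 - r)⁻¹) := by
    have hfe2 : (fun n : ℕ => bnd (-((n : ℤ) + 1))) = fun n : ℕ => (C * r) * r ^ n := by
      funext n
      rw [hbnddef]
      simp only [if_neg (show -((n : ℤ) + 1) ≠ 0 from by omega)]
      rw [show (-((n : ℤ) + 1)).natAbs = n + 1 from by omega, pow_succ]
      ring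
    rw [hfe2]; exact hgeo
  have htotal : HasSum bnd (2 * (C * r * (1 - r)⁻¹)) := by
    have h := HasSum.of_nat_of_neg_add_one hnat hneg
    convert h using 1
    ring
  have hbnd_sum : Summable bnd := htotal.summable
  have hsummF : Summable fun j : ℤ => ‖Fn (j * N)‖ :=
    hbnd_sum.of_nonneg_of_le (fun _ => norm_nonneg _) hbnd
  have hle : ‖(2 * (Real.pi:ℂ) / N) * ∑ k ∈ Finset.Icc 1 N, v ((θk k : ℝ) : ℂ)
      - (2 * (Real.pi:ℂ)) * c 0‖ ≤ 2 * (C * r * (1 - r)⁻¹) := by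
    rw [← hj.tsum_eq]
    calc ‖∑' j : ℤ, Fn (j * N)‖ ≤ ∑' j : ℤ, ‖Fn (j * N)‖ := norm_tsum_le_tsum_norm hsummF
      _ ≤ ∑' j : ℤ, bnd j := Summable.tsum_le_tsum hbnd hsummF hbnd_sum
      _ = 2 * (C * r * (1 - r)⁻¹) := htotal.tsum_eq
  have hEgt : 1 < Real.exp (γ * N) := by
    calc (1:ℝ) = Real.exp 0 := Real.exp_zero.symm
      _ < Real.exp (γ * N) := Real.exp_lt_exp.mpr (by positivity)
  have hrel : 2 * (C * r * (1 - r)⁻¹) = 4 * Real.pi * M / (Real.exp (γ * N) - 1) := by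
    have hrE : r * Real.exp (γ * N) = 1 := by rw [hrdef, ← Real.exp_add]; simp
    have hEm1 : Real.exp (γ * N) - 1 ≠ 0 := sub_ne_zero_of_ne hEgt.ne'
    have h1r : (1 : ℝ) - r ≠ 0 := sub_ne_zero_of_ne hrlt.ne'
    rw [hC]
    field_simp
    linear_combination 4 * hrE
  rw [hI]
  rw [← hrel]
  exact hle

end Main

/-- Trefethen–Weideman: exponential convergence of the trapezoidal rule for a
`2π`-periodic function analytic and bounded by `M` in the strip `|Im θ| < γ`. -/
theorem stmt11 (γ M : ℝ) (hγ : 0 < γ) (hM : 0 < M) (v : ℂ → ℂ)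
    (hper : ∀ θ : ℂ, v (θ + 2 * Real.pi) = v θ)
    (hana : AnalyticOn ℂ v {θ : ℂ | |θ.im| < γ})
    (hbdd : ∀ θ : ℂ, |θ.im| < γ → ‖v θ‖ < M)
    (N : ℕ) (hN : 1 ≤ N) :
    ‖(2 * Real.pi / N) * ∑ k ∈ Finset.Icc 1 N, v ((2 * Real.pi * k / N - Real.pi : ℝ) : ℂ)
          - ∫ θ : ℝ in (-Real.pi)..Real.pi, v (θ : ℂ)‖
      ≤ 4 * Real.pi * M / (Real.exp (γ * N) - 1) :=
  stmt11' γ M v hγ hM hper hana.differentiableOn hbdd N hN
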